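/- arXiv:1902.09800 — 2 statements merged into one kernel-verified Lean document; each statement's English description precedes it below -/
import Mathlib

section
/- Let T > 0, let A : ℝ → ℍ^{n×n} be continuous with A(t+T) = A(t), and let M be the principal fundamental matrix of ẋ = A(t)x with M(0) = I. Then: (i) the system has a nontrivial T-periodic solution (a solution x not identically zero with x(t+T) = x(t) for all t) if and only if 1 is a characteristic multiplier, i.e. 1 is a standard eigenvalue of M(T); (ii) if −1 is a characteristic multiplier (i.e. −1 is an eigenvalue of χ_{M(T)}), then the system has a nontrivial 2T-periodic solution. -/
open Matrix Polynomial
open scoped Quaternion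

noncomputable section

/-- The two complex components of a quaternion: `q = c1 q + (c2 q) * j`,
identifying `ℂ` with the real span of `1` and `i` in `ℍ`. -/
def Quaternion.c1 (q : ℍ[ℝ]) : ℂ := ⟨q.re, q.imI⟩

def Quaternion.c2 (q : ℍ[ℝ]) : ℂ := ⟨q.imJ, q.imK⟩

/-- The embedding of `ℂ` into `ℍ` as the real span of `1` and `i`. -/
def Complex.toQuat (z : ℂ) : ℍ[ℝ] := ⟨z.re, z.im, 0, 0⟩

/-- The complex adjoint matrix `χ_A` of a quaternion matrix `A = A₁ + A₂·j`:
the block matrix `[[A₁, A₂], [-conj A₂, conj A₁]]`. -/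
def chiMat {n : ℕ} (A : Matrix (Fin n) (Fin n) ℍ[ℝ]) :
    Matrix (Fin n ⊕ Fin n) (Fin n ⊕ Fin n) ℂ :=
  Matrix.fromBlocks (A.map Quaternion.c1) (A.map Quaternion.c2)
    ((-(A.map Quaternion.c2)).map (starRingEnd ℂ)) ((A.map Quaternion.c1).map (starRingEnd ℂ))

/-- `ρ` is a standard eigenvalue of the quaternion matrix `A`: an eigenvalue of the
complex adjoint matrix `χ_A` with nonnegative imaginary part. -/
def IsStdEigenvalue {n : ℕ} (A : Matrix (Fin n) (Fin n) ℍ[ℝ]) (ρ : ℂ) : Prop :=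
  (chiMat A).charpoly.IsRoot ρ ∧ 0 ≤ ρ.im

/-- `s` is the multiset of standard eigenvalues of `A` counted with multiplicity:
it has `n` elements, all with nonnegative imaginary part, and the characteristic
polynomial of `χ_A` is `∏_{z ∈ s} (X - z)·(X - conj z)`. -/
def IsStdEigs {n : ℕ} (A : Matrix (Fin n) (Fin n) ℍ[ℝ]) (s : Multiset ℂ) : Prop :=
  Multiset.card s = n ∧ (∀ z ∈ s, 0 ≤ z.im) ∧
    (chiMat A).charpoly =
      (s.map (fun z => (X - C z) * (X - C (starRingEnd ℂ z)))).prod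

/-- `x : ℝ → ℍ^n` is a solution of the linear quaternionic system `ẋ = A(t)x`. -/
def IsSol {n : ℕ} (A : ℝ → Matrix (Fin n) (Fin n) ℍ[ℝ]) (x : ℝ → Fin n → ℍ[ℝ]) : Prop :=
  ∀ t : ℝ, HasDerivAt x ((A t).mulVec (x t)) t

/-- The norm `‖x‖ = Σ_k |x_k|` on `ℍ^n`. -/
def vecNorm {n : ℕ} (x : Fin n → ℍ[ℝ]) : ℝ := ∑ k, ‖x k‖

/-- The norm `‖A‖ = Σ_{i,j} |a_{ij}|` on `ℍ^{n×n}`. -/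
def matNorm {n : ℕ} (A : Matrix (Fin n) (Fin n) ℍ[ℝ]) : ℝ := ∑ i, ∑ j, ‖A i j‖

/-- Stability (in the sense of Lyapunov) of the system `ẋ = A(t)x` at `t₀`. -/
def StableAt {n : ℕ} (A : ℝ → Matrix (Fin n) (Fin n) ℍ[ℝ]) (t₀ : ℝ) : Prop :=
  ∀ ε > (0:ℝ), ∃ δ > (0:ℝ), ∀ x : ℝ → Fin n → ℍ[ℝ], IsSol A x →
    vecNorm (x t₀) < δ → ∀ t ≥ t₀, vecNorm (x t) < ε

/-- Asymptotic stability of the system `ẋ = A(t)x` at `t₀`. -/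
def AsympStableAt {n : ℕ} (A : ℝ → Matrix (Fin n) (Fin n) ℍ[ℝ]) (t₀ : ℝ) : Prop :=
  StableAt A t₀ ∧ ∃ δ > (0:ℝ), ∀ x : ℝ → Fin n → ℍ[ℝ], IsSol A x →
    vecNorm (x t₀) < δ →
      Filter.Tendsto (fun t => vecNorm (x t)) Filter.atTop (nhds 0)

/-- `M` is a fundamental matrix of `ẋ = A(t)x`: entrywise `M'(t) = A(t)·M(t)`
and `M(t)` is invertible for every `t`. -/
def IsFundamental {n : ℕ} (A M : ℝ → Matrix (Fin n) (Fin n) ℍ[ℝ]) : Prop :=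
  (∀ (t : ℝ) (i j : Fin n), HasDerivAt (fun s => M s i j) ((A t * M t) i j) t) ∧
    ∀ t : ℝ, IsUnit (M t)

namespace StdEigAux

open Quaternion Complex

lemma c1_add (p q : ℍ[ℝ]) : (p + q).c1 = p.c1 + q.c1 := by
  apply Complex.ext <;> simp [Quaternion.c1]

lemma c2_add (p q : ℍ[ℝ]) : (p + q).c2 = p.c2 + q.c2 := by
  apply Complex.ext <;> simp [Quaternion.c2]

lemma c1_zero : (0 : ℍ[ℝ]).c1 = 0 := by apply Complex.ext <;> simp [Quaternion.c1]

lemma c2_zero : (0 : ℍ[ℝ]).c2 = 0 := by apply Complex.ext <;> simp [Quaternion.c2]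

/-- `c1` as an additive monoid hom. -/
def c1Hom : ℍ[ℝ] →+ ℂ := ⟨⟨Quaternion.c1, c1_zero⟩, c1_add⟩

def c2Hom : ℍ[ℝ] →+ ℂ := ⟨⟨Quaternion.c2, c2_zero⟩, c2_add⟩

lemma c1_sum {ι : Type*} (s : Finset ι) (f : ι → ℍ[ℝ]) :
    (∑ j ∈ s, f j).c1 = ∑ j ∈ s, (f j).c1 := map_sum c1Hom f s

lemma c2_sum {ι : Type*} (s : Finset ι) (f : ι → ℍ[ℝ]) :
    (∑ j ∈ s, f j).c2 = ∑ j ∈ s, (f j).c2 := map_sum c2Hom f s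

lemma c1_mul (p q : ℍ[ℝ]) :
    (p * q).c1 = p.c1 * q.c1 - p.c2 * (starRingEnd ℂ) q.c2 := by
  apply Complex.ext <;>
    simp [Quaternion.c1, Quaternion.c2, Quaternion.re_mul, Quaternion.imI_mul,
      Complex.mul_re, Complex.mul_im] <;> ring

lemma c2_mul (p q : ℍ[ℝ]) :
    (p * q).c2 = p.c1 * q.c2 + p.c2 * (starRingEnd ℂ) q.c1 := by
  apply Complex.ext <;>
    simp [Quaternion.c1, Quaternion.c2, Quaternion.imJ_mul, Quaternion.imK_mul,
      Complex.mul_re, Complex.mul_im] <;> ring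

lemma c1_real_smul (r : ℝ) (q : ℍ[ℝ]) : (r • q).c1 = (r : ℂ) * q.c1 := by
  apply Complex.ext <;> simp [Quaternion.c1, Complex.mul_re, Complex.mul_im]

lemma c2_real_smul (r : ℝ) (q : ℍ[ℝ]) : (r • q).c2 = (r : ℂ) * q.c2 := by
  apply Complex.ext <;> simp [Quaternion.c2, Complex.mul_re, Complex.mul_im]

/-- Encoding of a quaternionic vector as a complex vector of doubled dimension. -/
def toC {n : ℕ} (v : Fin n → ℍ[ℝ]) : Fin n ⊕ Fin n → ℂ :=
  Sum.elim (fun i => (v i).c1) (fun i => -(starRingEnd ℂ) ((v i).c2))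

lemma toC_injective {n : ℕ} : Function.Injective (toC (n := n)) := by
  intro v w h
  funext i
  have h1 : (v i).c1 = (w i).c1 := congrFun h (Sum.inl i)
  have h2 : -(starRingEnd ℂ) ((v i).c2) = -(starRingEnd ℂ) ((w i).c2) :=
    congrFun h (Sum.inr i)
  have h2' : (v i).c2 = (w i).c2 := by
    have := neg_injective h2
    exact (starRingEnd ℂ).injective this
  ext
  · exact congrArg Complex.re h1
  · exact congrArg Complex.im h1
  · exact congrArg Complex.re h2'
  · exact congrArg Complex.im h2'

/-- Decoding. -/
def ofC {n : ℕ} (u : Fin n ⊕ Fin n → ℂ) : Fin n → ℍ[ℝ] := fun i =>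
  ⟨(u (Sum.inl i)).re, (u (Sum.inl i)).im, -(u (Sum.inr i)).re, (u (Sum.inr i)).im⟩

lemma toC_ofC {n : ℕ} (u : Fin n ⊕ Fin n → ℂ) : toC (ofC u) = u := by
  funext k
  cases k with
  | inl i => apply Complex.ext <;> simp [toC, ofC, Quaternion.c1]
  | inr i => apply Complex.ext <;> simp [toC, ofC, Quaternion.c2]

lemma toC_zero {n : ℕ} : toC (0 : Fin n → ℍ[ℝ]) = 0 := by
  funext k
  cases k with
  | inl i => simp [toC, c1_zero]
  | inr i => simp [toC, c2_zero]

lemma toC_real_smul {n : ℕ} (r : ℝ) (v : Fin n → ℍ[ℝ]) :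
    toC (r • v) = (r : ℂ) • toC v := by
  funext k
  cases k with
  | inl i => simp [toC, c1_real_smul]
  | inr i =>
      simp only [toC, Sum.elim_inr, Pi.smul_apply, c2_real_smul, _root_.map_mul,
        Complex.conj_ofReal, Pi.smul_apply, smul_eq_mul]
      ring

lemma chi_mulVec {n : ℕ} (B : Matrix (Fin n) (Fin n) ℍ[ℝ]) (v : Fin n → ℍ[ℝ]) :
    (chiMat B).mulVec (toC v) = toC (B.mulVec v) := by
  funext k
  cases k with
  | inl i =>
      simp only [chiMat, toC, Matrix.mulVec, dotProduct, Sum.elim_inl,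
        Fintype.sum_sum_type, Matrix.fromBlocks_apply₁₁, Matrix.fromBlocks_apply₁₂,
        Matrix.map_apply, c1_sum, Sum.elim_inl, Sum.elim_inr]
      rw [← Finset.sum_add_distrib]
      refine Finset.sum_congr rfl fun j _ => ?_
      rw [c1_mul]
      ring
  | inr i =>
      simp only [chiMat, toC, Matrix.mulVec, dotProduct, Sum.elim_inr,
        Fintype.sum_sum_type, Matrix.fromBlocks_apply₂₁, Matrix.fromBlocks_apply₂₂,
        Matrix.map_apply, Matrix.neg_apply, c2_sum, map_sum, Sum.elim_inl, Sum.elim_inr]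
      rw [← Finset.sum_add_distrib, ← Finset.sum_neg_distrib]
      refine Finset.sum_congr rfl fun j _ => ?_
      simp only [map_neg, c2_mul, _root_.map_add, _root_.map_mul, Complex.conj_conj]
      ring

lemma charpoly_isRoot_iff {m : Type*} [Fintype m] [DecidableEq m] (B : Matrix m m ℂ) (ρ : ℂ) :
    B.charpoly.IsRoot ρ ↔ ∃ u : m → ℂ, u ≠ 0 ∧ B.mulVec u = ρ • u := by
  have hmap : (Matrix.charmatrix B).map (Polynomial.eval ρ) = ρ • (1 : Matrix m m ℂ) - B := by
    ext i j
    by_cases h : i = j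
    · subst h
      simp [Matrix.charmatrix_apply_eq, Matrix.one_apply]
    · simp [Matrix.charmatrix_apply_ne _ _ _ h, Matrix.one_apply, h]
  have h1 : B.charpoly.IsRoot ρ ↔ (ρ • (1 : Matrix m m ℂ) - B).det = 0 := by
    rw [Polynomial.IsRoot, Matrix.charpoly,
      show Polynomial.eval ρ = ⇑(Polynomial.evalRingHom ρ) from rfl,
      RingHom.map_det, RingHom.mapMatrix_apply, Polynomial.coe_evalRingHom, hmap]
  rw [h1, ← Matrix.exists_mulVec_eq_zero_iff]
  constructor
  · rintro ⟨u, hu, h⟩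
    refine ⟨u, hu, ?_⟩
    rw [Matrix.sub_mulVec, Matrix.smul_mulVec, Matrix.one_mulVec, sub_eq_zero] at h
    exact h.symm
  · rintro ⟨u, hu, h⟩
    refine ⟨u, hu, ?_⟩
    rw [Matrix.sub_mulVec, Matrix.smul_mulVec, Matrix.one_mulVec, sub_eq_zero, h]

lemma std_root_iff {n : ℕ} (B : Matrix (Fin n) (Fin n) ℍ[ℝ]) (ρ : ℝ) :
    (chiMat B).charpoly.IsRoot (ρ : ℂ) ↔
      ∃ v : Fin n → ℍ[ℝ], v ≠ 0 ∧ B.mulVec v = ρ • v := by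
  rw [charpoly_isRoot_iff]
  constructor
  · rintro ⟨u, hu, h⟩
    refine ⟨ofC u, fun h0 => hu ?_, ?_⟩
    · rw [← toC_ofC u, h0, toC_zero]
    · apply toC_injective
      rw [← chi_mulVec, toC_ofC, h, toC_real_smul, toC_ofC]
  · rintro ⟨v, hv, h⟩
    refine ⟨toC v, fun h0 => hv (toC_injective (by rw [h0, toC_zero])), ?_⟩
    rw [chi_mulVec, h, toC_real_smul]

section ODE

open Set

lemma mulVec_norm_le {n : ℕ} (B : Matrix (Fin n) (Fin n) ℍ[ℝ]) (y : Fin n → ℍ[ℝ]) :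
    ‖B.mulVec y‖ ≤ matNorm B * ‖y‖ := by
  have hB : 0 ≤ matNorm B :=
    Finset.sum_nonneg fun i _ => Finset.sum_nonneg fun j _ => norm_nonneg _
  rw [pi_norm_le_iff_of_nonneg (by positivity)]
  intro i
  simp only [Matrix.mulVec, dotProduct]
  calc ‖∑ j, B i j * y j‖ ≤ ∑ j, ‖B i j‖ * ‖y‖ := by
        refine (norm_sum_le _ _).trans (Finset.sum_le_sum fun j _ => ?_)
        rw [norm_mul]
        exact mul_le_mul_of_nonneg_left (norm_le_pi_norm y j) (norm_nonneg _)
    _ = (∑ j, ‖B i j‖) * ‖y‖ := (Finset.sum_mul _ _ _).symm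
    _ ≤ matNorm B * ‖y‖ := by
        refine mul_le_mul_of_nonneg_right ?_ (norm_nonneg _)
        exact Finset.single_le_sum (f := fun i => ∑ j, ‖B i j‖)
          (fun i _ => Finset.sum_nonneg fun j _ => norm_nonneg _) (Finset.mem_univ i)

lemma exists_lip {n : ℕ} (A : ℝ → Matrix (Fin n) (Fin n) ℍ[ℝ]) (T : ℝ) (hT : 0 < T)
    (hA : Continuous A) (hAper : ∀ t, A (t + T) = A t) :
    ∃ K : NNReal, ∀ t, LipschitzWith K (fun y : Fin n → ℍ[ℝ] => (A t).mulVec y) := by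
  have hcont : Continuous fun t => matNorm (A t) := by
    unfold matNorm
    exact continuous_finset_sum _ fun i _ => continuous_finset_sum _ fun j _ =>
      (hA.matrix_elem i j).norm
  obtain ⟨c, hcmem, hmax⟩ := (isCompact_Icc (a := (0:ℝ)) (b := T)).exists_isMaxOn
    ⟨0, le_rfl, hT.le⟩ hcont.continuousOn
  have hbd : ∀ t, matNorm (A t) ≤ matNorm (A c) := by
    intro t
    have hper : Function.Periodic (fun t => matNorm (A t)) T := fun t => by simp [hAper t]
    obtain ⟨y, hy, hty⟩ := hper.exists_mem_Ico₀ hT t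
    rw [hty]
    exact hmax ⟨hy.1, hy.2.le⟩
  refine ⟨Real.toNNReal (matNorm (A c)), fun t => LipschitzWith.of_dist_le_mul fun y z => ?_⟩
  rw [dist_eq_norm, ← Matrix.mulVec_sub, dist_eq_norm]
  calc ‖(A t).mulVec (y - z)‖ ≤ matNorm (A t) * ‖y - z‖ := mulVec_norm_le _ _
    _ ≤ (Real.toNNReal (matNorm (A c)) : ℝ) * ‖y - z‖ := by
        refine mul_le_mul_of_nonneg_right ?_ (norm_nonneg _)
        rw [Real.coe_toNNReal']
        exact (hbd t).trans (le_max_left _ _)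

lemma sol_unique {E : Type*} [NormedAddCommGroup E] [NormedSpace ℝ E] {v : ℝ → E → E}
    {K : NNReal} (hv : ∀ t, LipschitzWith K (v t)) {f g : ℝ → E}
    (hf : ∀ t, HasDerivAt f (v t (f t)) t) (hg : ∀ t, HasDerivAt g (v t (g t)) t)
    (h0 : f 0 = g 0) : f = g := by
  funext t
  have h1 : (0:ℝ) < |t| + 1 := by positivity
  have hmem : t ∈ Ioo (-(|t| + 1)) (|t| + 1) := by
    constructor
    · nlinarith [neg_abs_le t, abs_nonneg t]
    · nlinarith [le_abs_self t, abs_nonneg t]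
  have h0mem : (0:ℝ) ∈ Ioo (-(|t| + 1)) (|t| + 1) := by
    refine ⟨by linarith, by linarith⟩
  exact ODE_solution_unique_of_mem_Ioo (v := v) (s := fun _ => univ)
    (fun s _ => (hv s).lipschitzOnWith) h0mem
    (fun s _ => ⟨hf s, mem_univ _⟩) (fun s _ => ⟨hg s, mem_univ _⟩) h0 hmem

lemma isSol_mulVec {n : ℕ} {A M : ℝ → Matrix (Fin n) (Fin n) ℍ[ℝ]}
    (hM : ∀ (t : ℝ) (i j : Fin n), HasDerivAt (fun s => M s i j) ((A t * M t) i j) t)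
    (c : Fin n → ℍ[ℝ]) : IsSol A (fun t => (M t).mulVec c) := by
  intro t
  rw [hasDerivAt_pi]
  intro i
  have h : HasDerivAt (fun s => ∑ j, M s i j * c j) (∑ j, (A t * M t) i j * c j) t :=
    HasDerivAt.fun_sum fun j _ => (hM t i j).mul_const (c j)
  have h2 : ((A t).mulVec ((M t).mulVec c)) i = ∑ j, (A t * M t) i j * c j := by
    rw [Matrix.mulVec_mulVec]
    simp [Matrix.mulVec, dotProduct]
  rw [h2]
  exact h

lemma IsSol.shift {n : ℕ} {A : ℝ → Matrix (Fin n) (Fin n) ℍ[ℝ]} {T : ℝ}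
    (hAper : ∀ t, A (t + T) = A t) {x : ℝ → Fin n → ℍ[ℝ]} (h : IsSol A x) :
    IsSol A (fun t => x (t + T)) := by
  intro t
  have hin : HasDerivAt (fun s : ℝ => s + T) 1 t := (hasDerivAt_id t).add_const T
  have := (h (t + T)).scomp t hin
  rw [hAper t, one_smul] at this
  exact this

end ODE

end StdEigAux

/-- (i) a nontrivial `T`-periodic solution exists iff `1` is a
characteristic multiplier; (ii) if `-1` is a characteristic multiplier then a
nontrivial `2T`-periodic solution exists. -/
theorem stmt18 {n : ℕ} (T : ℝ) (hT : 0 < T) (A M : ℝ → Matrix (Fin n) (Fin n) ℍ[ℝ])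
    (hA : Continuous A) (hAper : ∀ t, A (t + T) = A t) (hM : IsFundamental A M)
    (hM0 : M 0 = 1) :
    ((∃ x : ℝ → Fin n → ℍ[ℝ], IsSol A x ∧ x ≠ 0 ∧ ∀ t, x (t + T) = x t) ↔
      IsStdEigenvalue (M T) 1) ∧
    ((chiMat (M T)).charpoly.IsRoot (-1) →
      ∃ x : ℝ → Fin n → ℍ[ℝ], IsSol A x ∧ x ≠ 0 ∧ ∀ t, x (t + 2 * T) = x t) := by
  obtain ⟨K, hK⟩ := StdEigAux.exists_lip A T hT hA hAper
  have huniq : ∀ f g : ℝ → Fin n → ℍ[ℝ], IsSol A f → IsSol A g → f 0 = g 0 → f = g :=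
    fun f g hf hg h0 => StdEigAux.sol_unique hK hf hg h0
  have hsolM : ∀ c : Fin n → ℍ[ℝ], IsSol A (fun t => (M t).mulVec c) :=
    fun c => StdEigAux.isSol_mulVec hM.1 c
  have hM0v : ∀ c : Fin n → ℍ[ℝ], (M 0).mulVec c = c := fun c => by
    rw [hM0, Matrix.one_mulVec]
  have hrep : ∀ x, IsSol A x → x = fun t => (M t).mulVec (x 0) :=
    fun x hx => huniq x _ hx (hsolM (x 0)) (hM0v (x 0)).symm
  have hshift : ∀ (c : Fin n → ℍ[ℝ]) (t : ℝ),
      (M (t + T)).mulVec c = (M t).mulVec ((M T).mulVec c) := by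
    intro c t
    have h1 : IsSol A (fun t => (M (t + T)).mulVec c) :=
      StdEigAux.IsSol.shift hAper (hsolM c)
    have h2 := huniq _ _ h1 (hsolM ((M T).mulVec c)) (by simp [hM0v])
    exact congrFun h2 t
  have hne : ∀ v : Fin n → ℍ[ℝ], v ≠ 0 → (fun t => (M t).mulVec v) ≠ 0 := by
    intro v hvne h
    apply hvne
    have := congrFun h 0
    simpa [hM0v] using this
  constructor
  · constructor
    · rintro ⟨x, hx, hxne, hxper⟩
      have hx' := hrep x hx
      have hvne : x 0 ≠ 0 := by
        intro h
        apply hxne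
        rw [hx', h]
        funext t
        simp [Matrix.mulVec_zero]
      have hMTv : (M T).mulVec (x 0) = (1:ℝ) • (x 0) := by
        have h1 : x T = x 0 := by simpa using hxper 0
        have h2 : x T = (M T).mulVec (x 0) := congrFun hx' T
        rw [one_smul, ← h2, h1]
      refine ⟨?_, by norm_num⟩
      have := (StdEigAux.std_root_iff (M T) 1).2 ⟨x 0, hvne, hMTv⟩
      simpa using this
    · rintro ⟨hroot, -⟩
      obtain ⟨v, hvne, hMTv⟩ := (StdEigAux.std_root_iff (M T) 1).1 (by simpa using hroot)
      rw [one_smul] at hMTv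
      refine ⟨fun t => (M t).mulVec v, hsolM v, hne v hvne, fun t => ?_⟩
      show (M (t + T)).mulVec v = (M t).mulVec v
      rw [hshift, hMTv]
  · intro hroot
    obtain ⟨v, hvne, hMTv⟩ := (StdEigAux.std_root_iff (M T) (-1)).1 (by simpa using hroot)
    have hMTv' : (M T).mulVec v = -v := by rw [hMTv, neg_smul, one_smul]
    refine ⟨fun t => (M t).mulVec v, hsolM v, hne v hvne, fun t => ?_⟩
    show (M (t + 2 * T)).mulVec v = (M t).mulVec v
    have h2T : t + 2 * T = (t + T) + T := by ring
    rw [h2T, hshift, hMTv', Matrix.mulVec_neg, hshift, hMTv', Matrix.mulVec_neg, neg_neg]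
end
end

section
/- Quaternion-valued Hill's equation: let T > 0, let a : ℝ → ℍ be continuous with a(t+T) = a(t), consider the system ẋ = A(t)x with A(t) = [[0, 1], [−a(t), 0]] ∈ ℍ^{2×2}, and let M be the principal fundamental matrix with M(0) = I. Let ρ₁, ρ₂ be the two characteristic multipliers (the standard eigenvalues of M(T), with multiplicity). Then Re(ρ₁) + Re(ρ₂) = Re(tr M(T)) and |ρ₁|·|ρ₂| = 1. Consequently, if |Re(tr M(T))| > 2, then one of the characteristic multipliers has modulus strictly greater than 1. -/
open Matrix Polynomial
open scoped Quaternion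

noncomputable section

namespace QH

@[simp] lemma c1_re (q : ℍ[ℝ]) : (Quaternion.c1 q).re = q.re := rfl
@[simp] lemma c1_im (q : ℍ[ℝ]) : (Quaternion.c1 q).im = q.imI := rfl
@[simp] lemma c2_re (q : ℍ[ℝ]) : (Quaternion.c2 q).re = q.imJ := rfl
@[simp] lemma c2_im (q : ℍ[ℝ]) : (Quaternion.c2 q).im = q.imK := rfl

lemma c1_add (x y : ℍ[ℝ]) : Quaternion.c1 (x + y) = Quaternion.c1 x + Quaternion.c1 y := by
  apply Complex.ext <;> simp

lemma c2_add (x y : ℍ[ℝ]) : Quaternion.c2 (x + y) = Quaternion.c2 x + Quaternion.c2 y := by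
  apply Complex.ext <;> simp

lemma c1_smul (r : ℝ) (x : ℍ[ℝ]) : Quaternion.c1 (r • x) = r • Quaternion.c1 x := by
  apply Complex.ext <;> simp [Complex.real_smul]

lemma c2_smul (r : ℝ) (x : ℍ[ℝ]) : Quaternion.c2 (r • x) = r • Quaternion.c2 x := by
  apply Complex.ext <;> simp [Complex.real_smul]

lemma c1_mul (x y : ℍ[ℝ]) :
    Quaternion.c1 (x * y) =
      Quaternion.c1 x * Quaternion.c1 y - Quaternion.c2 x * (starRingEnd ℂ) (Quaternion.c2 y) := by
  apply Complex.ext <;>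
    simp [Quaternion.re_mul, Quaternion.imI_mul, Complex.mul_re, Complex.mul_im] <;> ring

lemma c2_mul (x y : ℍ[ℝ]) :
    Quaternion.c2 (x * y) =
      Quaternion.c1 x * Quaternion.c2 y + Quaternion.c2 x * (starRingEnd ℂ) (Quaternion.c1 y) := by
  apply Complex.ext <;>
    simp [Quaternion.imJ_mul, Quaternion.imK_mul, Complex.mul_re, Complex.mul_im] <;> ring

@[simp] lemma c1_zero : Quaternion.c1 0 = 0 := by apply Complex.ext <;> simp
@[simp] lemma c2_zero : Quaternion.c2 0 = 0 := by apply Complex.ext <;> simp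
@[simp] lemma c1_one : Quaternion.c1 1 = 1 := by apply Complex.ext <;> simp
@[simp] lemma c2_one : Quaternion.c2 1 = 0 := by apply Complex.ext <;> simp

def c1ₗ : ℍ[ℝ] →ₗ[ℝ] ℂ := { toFun := Quaternion.c1, map_add' := c1_add, map_smul' := c1_smul }
def c2ₗ : ℍ[ℝ] →ₗ[ℝ] ℂ := { toFun := Quaternion.c2, map_add' := c2_add, map_smul' := c2_smul }

def c3ₗ : ℍ[ℝ] →ₗ[ℝ] ℂ where
  toFun q := -(starRingEnd ℂ) (Quaternion.c2 q)
  map_add' x y := by simp [c2_add]; try ring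
  map_smul' r x := by
    simp [c2_smul, Complex.real_smul]
    try ring

def c4ₗ : ℍ[ℝ] →ₗ[ℝ] ℂ where
  toFun q := (starRingEnd ℂ) (Quaternion.c1 q)
  map_add' x y := by simp [c1_add]
  map_smul' r x := by simp [c1_smul, Complex.real_smul]

def c1C : ℍ[ℝ] →L[ℝ] ℂ := LinearMap.toContinuousLinearMap c1ₗ
def c2C : ℍ[ℝ] →L[ℝ] ℂ := LinearMap.toContinuousLinearMap c2ₗ
def c3C : ℍ[ℝ] →L[ℝ] ℂ := LinearMap.toContinuousLinearMap c3ₗ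
def c4C : ℍ[ℝ] →L[ℝ] ℂ := LinearMap.toContinuousLinearMap c4ₗ

def c1sum : ℍ[ℝ] →+ ℂ := { toFun := Quaternion.c1, map_zero' := c1_zero, map_add' := c1_add }
def c2sum : ℍ[ℝ] →+ ℂ := { toFun := Quaternion.c2, map_zero' := c2_zero, map_add' := c2_add }

lemma chiMat_one {n : ℕ} : chiMat (1 : Matrix (Fin n) (Fin n) ℍ[ℝ]) = 1 := by
  ext i j
  rcases i with i | i <;> rcases j with j | j <;>
    simp [chiMat, Matrix.one_apply] <;> split <;>
    simp_all [c1_one, c2_one, c1_zero, c2_zero]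

lemma chiMat_mul {n : ℕ} (A B : Matrix (Fin n) (Fin n) ℍ[ℝ]) :
    chiMat (A * B) = chiMat A * chiMat B := by
  ext i j
  have e1 : Quaternion.c1 = ⇑c1sum := rfl
  have e2 : Quaternion.c2 = ⇑c2sum := rfl
  rcases i with i | i <;> rcases j with j | j <;>
  · simp only [chiMat, Matrix.fromBlocks_apply₁₁,
      Matrix.fromBlocks_apply₁₂, Matrix.fromBlocks_apply₂₁, Matrix.fromBlocks_apply₂₂,
      Matrix.mul_apply, Matrix.map_apply, Matrix.neg_apply, Fintype.sum_sum_type,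
      e1, e2, map_sum, map_neg, neg_neg, ← Finset.sum_neg_distrib, ← Finset.sum_add_distrib]
    refine Finset.sum_congr rfl fun k _ => ?_
    simp only [c1sum, c2sum, AddMonoidHom.coe_mk, ZeroHom.coe_mk, c1_mul, c2_mul,
      _root_.map_mul, _root_.map_add, _root_.map_sub, map_neg, Complex.conj_conj]
    try ring

lemma trace_chiMat {n : ℕ} (A : Matrix (Fin n) (Fin n) ℍ[ℝ]) :
    (chiMat A).trace = ((2 * (A.trace).re : ℝ) : ℂ) := by
  have h1 : (chiMat A).trace = (A.map Quaternion.c1).trace +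
      ((A.map Quaternion.c1).map (starRingEnd ℂ)).trace := by
    simp [Matrix.trace, chiMat, Fintype.sum_sum_type, Matrix.diag]
  have h2 : ((A.map Quaternion.c1).map (starRingEnd ℂ)).trace
      = (starRingEnd ℂ) ((A.map Quaternion.c1).trace) := by
    simp [Matrix.trace, Matrix.diag, map_sum]
  rw [h1, h2, Complex.add_conj]
  norm_cast
  congr 1
  simp only [Matrix.trace, Matrix.diag, Matrix.map_apply, Complex.re_sum]
  have hre : ∀ (f : Fin n → ℍ[ℝ]) (s : Finset (Fin n)),
      (∑ i ∈ s, f i).re = ∑ i ∈ s, (f i).re := by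
    intro f s
    induction s using Finset.induction with
    | empty => simp
    | insert _ _ h ih => simp [Finset.sum_insert h, ih]
  rw [hre]
  rfl

variable {m : Type*} [Fintype m] [DecidableEq m]

def detCML (m : Type*) [Fintype m] [DecidableEq m] :
    ContinuousMultilinearMap ℂ (fun _ : m => m → ℂ) ℂ :=
  { (Matrix.detRowAlternating : (m → ℂ) [⋀^m]→ₗ[ℂ] ℂ).toMultilinearMap with
    cont := by
      show Continuous fun v : m → m → ℂ => Matrix.detRowAlternating v
      have : Continuous fun v : m → m → ℂ => (Matrix.of v).det := by
        apply Continuous.matrix_det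
        exact continuous_pi fun i => continuous_pi fun j =>
          ((continuous_apply j).comp (continuous_apply i))
      exact this }

lemma hasDerivAt_det (N : ℝ → Matrix m m ℂ) (N' : Matrix m m ℂ) (t : ℝ)
    (h : ∀ i j, HasDerivAt (fun s => N s i j) (N' i j) t) :
    HasDerivAt (fun s => (N s).det) (∑ i, ((N t).updateRow i (N' i)).det) t := by
  have hg : HasDerivAt (fun s => (fun i => N s i)) (fun i => N' i) t := by
    rw [hasDerivAt_pi]
    intro i
    rw [hasDerivAt_pi]
    intro j
    exact h i j
  have hf := (((detCML m).hasFDerivAt (fun i => N t i)).restrictScalars ℝ).comp_hasDerivAt t hg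
  convert hf using 1
  show _ = ((detCML m).linearDeriv fun i => N t i) fun i => N' i
  rw [ContinuousMultilinearMap.linearDeriv_apply]
  exact Finset.sum_congr rfl fun i _ => rfl
  · rfl
  · rfl

lemma sum_det_updateRow (B N : Matrix m m ℂ) :
    ∑ i, (N.updateRow i ((B * N) i)).det = B.trace * N.det := by
  have hrow : ∀ i, (B * N) i = ∑ k, B i k • N k := by
    intro i
    funext j
    simp [Matrix.mul_apply, Finset.sum_apply]
  simp_rw [hrow, Matrix.det_updateRow_sum]
  simp [Matrix.trace, Matrix.diag, Finset.sum_mul, smul_eq_mul]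

lemma chi_hasDerivAt {n : ℕ} (Mf : ℝ → Matrix (Fin n) (Fin n) ℍ[ℝ])
    (D : Matrix (Fin n) (Fin n) ℍ[ℝ]) (t : ℝ)
    (h : ∀ i j, HasDerivAt (fun s => Mf s i j) (D i j) t) :
    ∀ i j, HasDerivAt (fun s => chiMat (Mf s) i j) (chiMat D i j) t := by
  intro i j
  rcases i with i | i <;> rcases j with j | j
  · have := (c1C.hasFDerivAt (x := Mf t i j)).comp_hasDerivAt t (h i j)
    simpa [chiMat, Function.comp_def, c1C, c1ₗ] using this
  · have := (c2C.hasFDerivAt (x := Mf t i j)).comp_hasDerivAt t (h i j)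
    simpa [chiMat, Function.comp_def, c2C, c2ₗ] using this
  · have := (c3C.hasFDerivAt (x := Mf t i j)).comp_hasDerivAt t (h i j)
    simpa [chiMat, Function.comp_def, c3C, c3ₗ] using this
  · have := (c4C.hasFDerivAt (x := Mf t i j)).comp_hasDerivAt t (h i j)
    simpa [chiMat, Function.comp_def, c4C, c4ₗ] using this

end QH

/-- for the quaternion-valued Hill equation, the characteristic
multipliers `ρ₁, ρ₂` satisfy `Re ρ₁ + Re ρ₂ = Re(tr M(T))` and `|ρ₁|·|ρ₂| = 1`;
hence `|Re(tr M(T))| > 2` forces one multiplier to have modulus `> 1`. -/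
theorem stmt19 (T : ℝ) (hT : 0 < T) (a : ℝ → ℍ[ℝ]) (ha : Continuous a)
    (haper : ∀ t, a (t + T) = a t) (A : ℝ → Matrix (Fin 2) (Fin 2) ℍ[ℝ])
    (hA : ∀ t, A t = !![0, 1; -a t, 0]) (M : ℝ → Matrix (Fin 2) (Fin 2) ℍ[ℝ])
    (hM : IsFundamental A M) (hM0 : M 0 = 1) (ρ₁ ρ₂ : ℂ)
    (hρ : IsStdEigs (M T) ({ρ₁, ρ₂} : Multiset ℂ)) :
    ρ₁.re + ρ₂.re = (Matrix.trace (M T)).re ∧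
    ‖ρ₁‖ * ‖ρ₂‖ = 1 ∧
    (2 < |(Matrix.trace (M T)).re| → 1 < ‖ρ₁‖ ∨ 1 < ‖ρ₂‖) := by
  classical
  -- the determinant of the adjoint of the monodromy matrix is 1, by Liouville
  have hNder : ∀ t : ℝ, HasDerivAt (fun s => (chiMat (M s)).det)
      ((chiMat (A t)).trace * (chiMat (M t)).det) t := by
    intro t
    have h1 := QH.chi_hasDerivAt M (A t * M t) t (fun i j => hM.1 t i j)
    have h2 := QH.hasDerivAt_det (fun s => chiMat (M s)) (chiMat (A t * M t)) t h1
    rw [QH.chiMat_mul] at h2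
    rw [← QH.sum_det_updateRow (chiMat (A t)) (chiMat (M t))]
    exact h2
  have htr0 : ∀ t : ℝ, (chiMat (A t)).trace = 0 := by
    intro t
    rw [QH.trace_chiMat]
    have h : (A t).trace = 0 := by
      rw [hA t]
      simp [Matrix.trace, Fin.sum_univ_two, Matrix.diag]
    rw [h]
    simp
  have hdet1 : (chiMat (M T)).det = 1 := by
    have hc := is_const_of_deriv_eq_zero (𝕜 := ℝ) (f := fun t => (chiMat (M t)).det)
      (fun t => (hNder t).differentiableAt)
      (fun t => by rw [(hNder t).deriv, htr0 t, zero_mul]) T 0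
    rw [hc, hM0, QH.chiMat_one, Matrix.det_one]
  obtain ⟨hcard, him, hch⟩ := hρ
  set P := (chiMat (M T)).charpoly with hPdef
  have hP : P = ((X - C ρ₁) * (X - C ((starRingEnd ℂ) ρ₁))) *
      ((X - C ρ₂) * (X - C ((starRingEnd ℂ) ρ₂))) := by
    rw [hch]
    simp [Multiset.insert_eq_cons]
  have h4 : Fintype.card (Fin 2 ⊕ Fin 2) = 4 := by simp
  -- determinant in terms of coefficients
  have hdetP : (chiMat (M T)).det = P.coeff 0 := by
    rw [Matrix.det_eq_sign_charpoly_coeff, h4]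
    norm_num
    rfl
  have hcoeff0 : P.coeff 0 = ((Complex.normSq ρ₁ * Complex.normSq ρ₂ : ℝ) : ℂ) := by
    rw [Polynomial.coeff_zero_eq_eval_zero, hP]
    simp only [eval_mul, eval_sub, eval_X, eval_C, zero_sub]
    rw [show (-ρ₁) * -((starRingEnd ℂ) ρ₁) * ((-ρ₂) * -((starRingEnd ℂ) ρ₂))
        = (ρ₁ * (starRingEnd ℂ) ρ₁) * (ρ₂ * (starRingEnd ℂ) ρ₂) by ring,
      Complex.mul_conj, Complex.mul_conj]
    push_cast
    ring
  have hns : Complex.normSq ρ₁ * Complex.normSq ρ₂ = 1 := by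
    have := hdet1.symm.trans (hdetP.trans hcoeff0)
    exact_mod_cast this.symm
  have habs : ‖ρ₁‖ * ‖ρ₂‖ = 1 := by
    have hsq : (‖ρ₁‖ * ‖ρ₂‖) ^ 2 = 1 := by
      rw [mul_pow, Complex.sq_norm, Complex.sq_norm, hns]
    have hn : 0 ≤ ‖ρ₁‖ * ‖ρ₂‖ :=
      mul_nonneg (norm_nonneg _) (norm_nonneg _)
    nlinarith [hsq, hn]
  -- trace
  have hmonic1 : ((X : ℂ[X]) - C ρ₁).Monic := monic_X_sub_C _
  have htrace : (chiMat (M T)).trace = ρ₁ + (starRingEnd ℂ) ρ₁ + (ρ₂ + (starRingEnd ℂ) ρ₂) := by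
    have hND : P.natDegree = 4 := by
      rw [hPdef, Matrix.charpoly_natDegree_eq_dim, h4]
    have hnc : P.nextCoeff = P.coeff 3 := by
      rw [Polynomial.nextCoeff_of_natDegree_pos (by rw [hND]; norm_num), hND]
    have hq1 : ((X - C ρ₁) * (X - C ((starRingEnd ℂ) ρ₁))).Monic :=
      (monic_X_sub_C _).mul (monic_X_sub_C _)
    have hq2 : ((X - C ρ₂) * (X - C ((starRingEnd ℂ) ρ₂))).Monic :=
      (monic_X_sub_C _).mul (monic_X_sub_C _)
    have hnext : P.nextCoeff = -(ρ₁ + (starRingEnd ℂ) ρ₁ + (ρ₂ + (starRingEnd ℂ) ρ₂)) := by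
      rw [hP, Polynomial.Monic.nextCoeff_mul hq1 hq2,
        Polynomial.Monic.nextCoeff_mul (monic_X_sub_C _) (monic_X_sub_C _),
        Polynomial.Monic.nextCoeff_mul (monic_X_sub_C _) (monic_X_sub_C _),
        nextCoeff_X_sub_C, nextCoeff_X_sub_C, nextCoeff_X_sub_C, nextCoeff_X_sub_C]
      ring
    rw [Matrix.trace_eq_neg_charpoly_coeff, h4]
    show -P.coeff 3 = _
    rw [← hnc, hnext, neg_neg]
  have hre : ρ₁.re + ρ₂.re = (Matrix.trace (M T)).re := by
    have h1 : ((2 * ((M T).trace).re : ℝ) : ℂ) = ((2 * ρ₁.re + 2 * ρ₂.re : ℝ) : ℂ) := by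
      rw [← QH.trace_chiMat, htrace, Complex.add_conj, Complex.add_conj]
      push_cast
      ring
    have h2 : 2 * ((M T).trace).re = 2 * ρ₁.re + 2 * ρ₂.re := by exact_mod_cast h1
    linarith
  refine ⟨hre, habs, ?_⟩
  intro hgt
  by_contra hcon
  push_neg at hcon
  obtain ⟨h1, h2⟩ := hcon
  have hb : |(Matrix.trace (M T)).re| ≤ 2 := by
    rw [← hre]
    calc |ρ₁.re + ρ₂.re| ≤ |ρ₁.re| + |ρ₂.re| := abs_add_le _ _
      _ ≤ ‖ρ₁‖ + ‖ρ₂‖ :=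
        add_le_add (Complex.abs_re_le_norm _) (Complex.abs_re_le_norm _)
      _ ≤ 2 := by linarith
  linarith
end
end
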